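/- Fix N ∈ ℕ, N ≥ 2, and assume f : [0,1] × ℝ → ℝ satisfies: C(c): f is continuous on [0,1] × ℝ with continuous partial derivative f_x with respect to the second variable; D(f): there exist positive constants A, B with A < 1 such that |f(t,x)| ≤ A|x| + B for all t ∈ [0,1], x ∈ ℝ; D(f_x): inf over [0,1] × ℝ of f_x is > −1. Then the operator D_N : 𝔼_N → 𝔼_N, (D_N x)(k) := Δ²x(k−1) − (1/N²) f(k/N, x(k)) for k = 1,…,N−1 and 0 for k = 0, N, is a diffeomorphism. -/

import Mathlib

/-- The space `𝔼_N` of functions `x : {0,…,N} → ℝ` with `x(0) = x(N) = 0` is identified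
with `ℝ^{N−1}` via the interior values `x(1),…,x(N−1)`; `ext N x k` recovers `x(k)` for
`k ∈ ℤ` (extending by `0` at the boundary and outside `{0,…,N}`).  With this
identification the Euclidean norm of `ℝ^{N−1}` is exactly `‖x‖_N`. -/
noncomputable def ext (N : ℕ) (x : EuclideanSpace ℝ (Fin (N-1))) (k : ℤ) : ℝ :=
  if h : 1 ≤ k ∧ k ≤ (N:ℤ) - 1 then x ⟨(k-1).toNat, by omega⟩ else 0

/-- The operator `D_N : 𝔼_N → 𝔼_N`,
`(D_N x)(k) = Δ²x(k−1) − (1/N²) f(k/N, x(k))` for `k = 1,…,N−1`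
(and `0` at `k = 0, N`), written on interior indices `k = i + 1`, `i : Fin (N−1)`. -/
noncomputable def DN (N : ℕ) (f : ℝ → ℝ → ℝ) (x : EuclideanSpace ℝ (Fin (N-1))) :
    EuclideanSpace ℝ (Fin (N-1)) :=
  WithLp.toLp 2 (fun i => ext N x ((i:ℕ)+2) - 2 * ext N x ((i:ℕ)+1) + ext N x (i:ℕ)
    - (1/(N:ℝ)^2) * f ((((i:ℕ):ℝ)+1)/(N:ℝ)) (ext N x ((i:ℕ)+1)))

open Filter Topology

section Abstract
variable {E : Type*} [NormedAddCommGroup E] [InnerProductSpace ℝ E] [FiniteDimensional ℝ E]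

local notation "⟪" x ", " y "⟫" => @inner ℝ _ _ x y

omit [FiniteDimensional ℝ E] in
theorem expand {F : E → E} {c : ℝ}
    (hm : ∀ x y : E, c * ‖x - y‖^2 ≤ ⟪F x - F y, x - y⟫) (x y : E) :
    c * ‖x - y‖ ≤ ‖F x - F y‖ := by
  rcases eq_or_ne x y with rfl | hne
  · simp
  · have h1 : ⟪F x - F y, x - y⟫ ≤ ‖F x - F y‖ * ‖x - y‖ := real_inner_le_norm _ _
    have h2 (h2 : ∀ x y : E, c * ‖x - y‖^2 ≤ ⟪F x - F y, x - y⟫) := hm x y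
    have h3 : 0 < ‖x - y‖ := by simpa [sub_eq_zero] using hne
    nlinarith [hm x y]

omit [FiniteDimensional ℝ E] in
theorem deriv_posdef {F : E → E} (hF : ContDiff ℝ 1 F) {c : ℝ}
    (hm : ∀ x y : E, c * ‖x - y‖^2 ≤ ⟪F x - F y, x - y⟫) (x v : E) :
    c * ‖v‖^2 ≤ ⟪fderiv ℝ F x v, v⟫ := by
  set L : E →L[ℝ] ℝ := innerSL ℝ v with hL
  set φ : ℝ → ℝ := fun t => L (F (x + t • v) - F x) with hφ
  have hcurve : HasDerivAt (fun t : ℝ => x + t • v) v 0 := by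
    simpa using ((hasDerivAt_id (0:ℝ)).smul_const v).const_add x
  have hDF : HasFDerivAt F (fderiv ℝ F x) (x + (0:ℝ) • v) := by
    simpa using (hF.differentiable one_ne_zero x).hasFDerivAt
  have hd : HasDerivAt φ ⟪fderiv ℝ F x v, v⟫ 0 := by
    have h1 : HasDerivAt (fun t : ℝ => F (x + t • v)) (fderiv ℝ F x v) 0 :=
      hDF.comp_hasDerivAt 0 hcurve
    have h2 : HasDerivAt (fun t : ℝ => F (x + t • v) - F x) (fderiv ℝ F x v) 0 :=
      h1.sub_const (F x)
    have h3 := L.hasFDerivAt.comp_hasDerivAt 0 h2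
    have h4 : L (fderiv ℝ F x v) = ⟪fderiv ℝ F x v, v⟫ := by
      simp [hL, real_inner_comm]
    rw [← h4]
    exact h3
  have hslope : ∀ t : ℝ, 0 < t → c * ‖v‖^2 ≤ φ t / t := by
    intro t ht
    have key := hm (x + t • v) x
    have he : (x + t • v) - x = t • v := by abel
    rw [he] at key
    have hv : ⟪F (x + t • v) - F x, t • v⟫ = t * φ t := by
      simp only [hφ, hL, innerSL_apply_apply, map_sub]
      rw [real_inner_smul_right, real_inner_comm, inner_sub_right]
    rw [hv, norm_smul, Real.norm_eq_abs, abs_of_pos ht] at key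
    rw [le_div_iff₀ ht]
    nlinarith [key]
  -- tendsto slope
  have htend : Tendsto (fun t => φ t / t) (𝓝[>] (0:ℝ)) (𝓝 ⟪fderiv ℝ F x v, v⟫) := by
    have h0 : φ 0 = 0 := by simp [hφ]
    have := hd.hasDerivWithinAt (s := Set.Ioi 0)
    have h1 := hasDerivWithinAt_iff_tendsto_slope.1 this
    have hsub : 𝓝[Set.Ioi (0:ℝ) \ {0}] (0:ℝ) = 𝓝[>] (0:ℝ)  := by
      congr 1
      ext z
      simp only [Set.mem_diff, Set.mem_Ioi, Set.mem_singleton_iff]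
      constructor
      · exact fun h => h.1
      · exact fun h => ⟨h, ne_of_gt h⟩
    rw [hsub] at h1
    refine h1.congr' ?_
    filter_upwards [self_mem_nhdsWithin] with t (ht : 0 < t)
    simp [slope, h0, div_eq_inv_mul]
  exact ge_of_tendsto htend (by filter_upwards [self_mem_nhdsWithin] with t ht using hslope t ht)


theorem strong_mono_diffeo {F : E → E} (hF : ContDiff ℝ 1 F) {c : ℝ} (hc : 0 < c)
    (hm : ∀ x y : E, c * ‖x - y‖^2 ≤ ⟪F x - F y, x - y⟫) :
    Function.Bijective F ∧ ∃ G : E → E, Function.LeftInverse G F ∧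
      Function.RightInverse G F ∧ ContDiff ℝ 1 G := by
  have hexp := expand hm
  have hinj : Function.Injective F := by
    intro x y h
    have h1 := hexp x y
    rw [h, sub_self, norm_zero] at h1
    have : ‖x - y‖ ≤ 0 := by nlinarith
    have := le_antisymm this (norm_nonneg _)
    rwa [norm_eq_zero, sub_eq_zero] at this
  have hderiv : ∀ x : E, Function.Injective (fderiv ℝ F x) := by
    intro x u v huv
    by_contra hne
    have hsub : u - v ≠ 0 := sub_ne_zero.2 hne
    have h1 := deriv_posdef hF hm x (u - v)
    rw [map_sub, huv, sub_self, inner_zero_left] at h1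
    have hp : 0 < ‖u - v‖ := norm_pos_iff.2 hsub
    nlinarith [mul_pos hc (pow_pos hp 2)]
  let Φ : E → (E ≃L[ℝ] E) := fun x =>
    LinearEquiv.toContinuousLinearEquiv
      ((fderiv ℝ F x).toLinearMap.linearEquivOfInjective (hderiv x) rfl)
  have hΦ : ∀ x, ((Φ x : E ≃L[ℝ] E) : E →L[ℝ] E) = fderiv ℝ F x := by
    intro x
    ext v
    simp [Φ]
  have hstrict : ∀ x, HasStrictFDerivAt F ((Φ x : E ≃L[ℝ] E) : E →L[ℝ] E) x := by
    intro x
    rw [hΦ]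
    exact (hF.contDiffAt).hasStrictFDerivAt one_ne_zero
  have hopen : IsOpenMap F := isOpenMap_of_hasStrictFDerivAt_equiv hstrict
  have hclosed : IsClosed (Set.range F) := by
    refine IsSeqClosed.isClosed ?_
    intro u p hu hup
    choose a ha using hu
    have hcau : CauchySeq u := hup.cauchySeq
    have hca : CauchySeq a := by
      rw [Metric.cauchySeq_iff] at hcau ⊢
      intro ε hε
      obtain ⟨M, hM⟩ := hcau (c * ε) (by positivity)
      refine ⟨M, fun m hm' n hn => ?_⟩
      have h1 := hexp (a m) (a n)
      rw [ha m, ha n] at h1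
      have h2 := hM m hm' n hn
      rw [dist_eq_norm] at h2 ⊢
      nlinarith
    obtain ⟨b, hb⟩ := cauchySeq_tendsto_of_complete hca
    refine ⟨b, ?_⟩
    have h1 : Tendsto (fun n => F (a n)) atTop (𝓝 (F b)) :=
      ((hF.continuous).tendsto b).comp hb
    have h2 : (fun n => F (a n)) = u := funext ha
    rw [h2] at h1
    exact tendsto_nhds_unique h1 hup
  have hsurj : Function.Surjective F := by
    rw [← Set.range_eq_univ]
    exact IsClopen.eq_univ ⟨hclosed, hopen.isOpen_range⟩ ⟨F 0, Set.mem_range_self 0⟩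
  have hbij : Function.Bijective F := ⟨hinj, hsurj⟩
  set G : E → E := ⇑(Equiv.ofBijective F hbij).symm with hG
  have hleft : Function.LeftInverse G F := (Equiv.ofBijective F hbij).leftInverse_symm
  have hright : Function.RightInverse G F := (Equiv.ofBijective F hbij).rightInverse_symm
  refine ⟨hbij, G, hleft, hright, ?_⟩
  rw [contDiff_iff_contDiffAt]
  intro y
  obtain ⟨x, rfl⟩ := hsurj y
  have hca : ContDiffAt ℝ 1 F x := hF.contDiffAt
  have hfd : HasFDerivAt F ((Φ x : E ≃L[ℝ] E) : E →L[ℝ] E) x := (hstrict x).hasFDerivAt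
  have hloc : ContDiffAt ℝ 1 (hca.localInverse hfd one_ne_zero) (F x) :=
    hca.to_localInverse hfd one_ne_zero
  refine hloc.congr_of_eventuallyEq ?_
  have hst' := hca.hasStrictFDerivAt' hfd one_ne_zero
  exact hst'.localInverse_unique (Eventually.of_forall fun z => hleft z)

end Abstract


lemma sumparts (M : ℕ) (w : ℕ → ℝ) (h0 : w 0 = 0) (hN : w (M+1) = 0) :
    ∑ i ∈ Finset.range M, (w (i+2) - 2*w (i+1) + w i) * w (i+1)
      = -∑ k ∈ Finset.range (M+1), (w (k+1) - w k)^2 := by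
  have e1 : ∑ k ∈ Finset.range (M+1), (w (k+1) - w k) * w k
      = ∑ i ∈ Finset.range M, (w (i+2) - w (i+1)) * w (i+1) := by
    rw [Finset.sum_range_succ']
    simp [h0]
  have e2 : ∑ k ∈ Finset.range (M+1), (w (k+1) - w k) * w (k+1)
      = ∑ i ∈ Finset.range M, (w (i+1) - w i) * w (i+1) := by
    rw [Finset.sum_range_succ]
    simp [hN]
  have e3 : -∑ k ∈ Finset.range (M+1), (w (k+1) - w k)^2
      = (∑ k ∈ Finset.range (M+1), (w (k+1) - w k) * w k)
        - ∑ k ∈ Finset.range (M+1), (w (k+1) - w k) * w (k+1) := by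
    rw [← Finset.sum_sub_distrib, ← Finset.sum_neg_distrib]
    exact Finset.sum_congr rfl fun k _ => by ring
  rw [e3, e1, e2, ← Finset.sum_sub_distrib]
  exact Finset.sum_congr rfl fun i _ => by ring

lemma poincare (M : ℕ) (w : ℕ → ℝ) (h0 : w 0 = 0) :
    ∑ i ∈ Finset.range M, (w (i+1))^2
      ≤ ((M:ℝ)+1)^2 * ∑ k ∈ Finset.range (M+1), (w (k+1) - w k)^2 := by
  set S := ∑ k ∈ Finset.range (M+1), (w (k+1) - w k)^2 with hS
  have hS0 : 0 ≤ S := Finset.sum_nonneg fun _ _ => sq_nonneg _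
  have hw : ∀ i ∈ Finset.range M, (w (i+1))^2 ≤ ((M:ℝ)+1) * S := by
    intro i hi
    rw [Finset.mem_range] at hi
    have htel : w (i+1) = ∑ j ∈ Finset.range (i+1), (w (j+1) - w j) := by
      rw [Finset.sum_range_sub w, h0, sub_zero]
    rw [htel]
    calc (∑ j ∈ Finset.range (i+1), (w (j+1) - w j))^2
        ≤ (Finset.range (i+1)).card * ∑ j ∈ Finset.range (i+1), (w (j+1) - w j)^2 :=
          sq_sum_le_card_mul_sum_sq
      _ ≤ ((M:ℝ)+1) * S := by
          apply mul_le_mul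
          · simp only [Finset.card_range]
            exact_mod_cast Nat.succ_le_succ hi.le
          · exact Finset.sum_le_sum_of_subset_of_nonneg
              (Finset.range_subset_range.2 (by omega)) (fun _ _ _ => sq_nonneg _)
          · exact Finset.sum_nonneg fun _ _ => sq_nonneg _
          · positivity
  calc ∑ i ∈ Finset.range M, (w (i+1))^2 ≤ ∑ _i ∈ Finset.range M, (((M:ℝ)+1) * S) :=
        Finset.sum_le_sum hw
    _ = (M:ℝ) * (((M:ℝ)+1) * S) := by rw [Finset.sum_const, Finset.card_range]; ring
    _ ≤ ((M:ℝ)+1)^2 * S := by nlinarith [Nat.cast_nonneg (α := ℝ) M]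

lemma mvt_ineq (g gx : ℝ → ℝ) (m : ℝ)
    (hd : ∀ z, HasDerivAt g (gx z) z) (hlb : ∀ z, m ≤ gx z)
    (a b : ℝ) : m * (a - b)^2 ≤ (g a - g b) * (a - b) := by
  have key : ∀ p q : ℝ, p < q → m * (q - p)^2 ≤ (g q - g p) * (q - p) := by
    intro p q hpq
    obtain ⟨ξ, hξ, hslope⟩ := exists_hasDerivAt_eq_slope g gx hpq
      (fun z _ => (hd z).continuousAt.continuousWithinAt) (fun z _ => hd z)
    have h1 : m ≤ (g q - g p) / (q - p) := hslope ▸ hlb ξ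
    have hq : 0 < q - p := sub_pos.2 hpq
    have h2 : m * (q - p) ≤ (g q - g p) / (q - p) * (q - p) :=
      mul_le_mul_of_nonneg_right h1 hq.le
    rw [div_mul_cancel₀ _ hq.ne'] at h2
    nlinarith
  rcases lt_trichotomy a b with h | h | h
  · nlinarith [key a b h]
  · simp [h]
  · nlinarith [key b a h]

lemma ext_zero (N : ℕ) (x : EuclideanSpace ℝ (Fin (N-1))) (k : ℤ)
    (hk : ¬(1 ≤ k ∧ k ≤ (N:ℤ) - 1)) : ext N x k = 0 := dif_neg hk

-- ext helpers
lemma ext_sub (N : ℕ) (x y : EuclideanSpace ℝ (Fin (N-1))) (k : ℤ) :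
    ext N (x - y) k = ext N x k - ext N y k := by
  unfold ext
  split_ifs with h
  · simp [PiLp.sub_apply]
  · simp

lemma ext_coord (N : ℕ) (hN : 2 ≤ N) (x : EuclideanSpace ℝ (Fin (N-1))) (i : Fin (N-1)) :
    ext N x ((i:ℕ)+1) = x i := by
  have hi : (i:ℕ) < N - 1 := i.isLt
  unfold ext
  rw [dif_pos (by omega)]
  refine congrArg x.ofLp (Fin.ext ?_)
  simp

lemma mem_unit (N : ℕ) (hN : 2 ≤ N) (i : Fin (N-1)) :
    (((i:ℕ):ℝ)+1)/(N:ℝ) ∈ Set.Icc (0:ℝ) 1 := by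
  have hi : (i:ℕ) < N - 1 := i.isLt
  have h1 : ((i:ℕ):ℝ) + 1 ≤ (N:ℝ) := by exact_mod_cast (show (i:ℕ)+1 ≤ N by omega)
  have hNpos : (0:ℝ) < (N:ℝ) := by exact_mod_cast (show 0 < N by omega)
  exact ⟨by positivity, by rw [div_le_one hNpos]; exact h1⟩

theorem key_ineq (N : ℕ) (hN : 2 ≤ N) (f fx : ℝ → ℝ → ℝ) (m : ℝ)
    (hfx_deriv : ∀ t ∈ Set.Icc (0:ℝ) 1, ∀ z : ℝ, HasDerivAt (fun w => f t w) (fx t z) z)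
    (hlb : ∀ t ∈ Set.Icc (0:ℝ) 1, ∀ z : ℝ, m ≤ fx t z)
    (x y : EuclideanSpace ℝ (Fin (N-1))) :
    inner (𝕜 := ℝ) (DN N f x - DN N f y) (x - y) ≤ -((1+m)/(N:ℝ)^2) * ‖x - y‖^2 := by
  set v : EuclideanSpace ℝ (Fin (N-1)) := x - y with hv
  set w : ℕ → ℝ := fun k => ext N v (k:ℤ) with hw
  have hM : N - 1 + 1 = N := by omega
  have hw0 : w 0 = 0 := ext_zero N v 0 (by omega)
  have hwN : w (N-1+1) = 0 := ext_zero N v _ (by push_cast; omega)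
  -- norm as sum
  have hnorm : ‖v‖^2 = ∑ k ∈ Finset.range (N-1), (w (k+1))^2 := by
    rw [← real_inner_self_eq_norm_sq]
    rw [PiLp.inner_apply]
    rw [← Fin.sum_univ_eq_sum_range (fun k => (w (k+1))^2)]
    apply Finset.sum_congr rfl
    intro i _
    have := ext_coord N hN v i
    simp only [RCLike.inner_apply, conj_trivial]
    rw [hw]
    push_cast
    rw [this]
    ring
  have hwdef : ∀ k : ℕ, w k = ext N (x - y) (k:ℤ) := by
    intro k
    simp only [hw, hv]
  have hN2 : (0:ℝ) < (N:ℝ)^2 := by positivity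
  have hsplit : inner (𝕜 := ℝ) (DN N f x - DN N f y) v
      = (∑ k ∈ Finset.range (N-1), (w (k+2) - 2*w (k+1) + w k) * w (k+1))
        - (1/(N:ℝ)^2) * ∑ i : Fin (N-1),
            (f ((((i:ℕ):ℝ)+1)/(N:ℝ)) (x i) - f ((((i:ℕ):ℝ)+1)/(N:ℝ)) (y i)) * (x i - y i) := by
    rw [PiLp.inner_apply]
    rw [← Fin.sum_univ_eq_sum_range (fun k => (w (k+2) - 2*w (k+1) + w k) * w (k+1))]
    rw [Finset.mul_sum, ← Finset.sum_sub_distrib]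
    apply Finset.sum_congr rfl
    intro i _
    simp only [RCLike.inner_apply, conj_trivial, DN, hv, PiLp.sub_apply]
    rw [ext_coord N hN x i, ext_coord N hN y i]
    have hA : ext N x (((i:ℕ):ℤ)+2) - ext N y (((i:ℕ):ℤ)+2) = w ((i:ℕ)+2) := by
      rw [hwdef, ← ext_sub]
      norm_cast
    have hC : ext N x ((i:ℕ):ℤ) - ext N y ((i:ℕ):ℤ) = w (i:ℕ) := by
      rw [hwdef, ← ext_sub]
    have hD : x i - y i = w ((i:ℕ)+1) := by
      rw [hwdef, show (((i:ℕ)+1:ℕ):ℤ) = ((i:ℕ):ℤ)+1 by omega, ext_sub,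
        ext_coord N hN x i, ext_coord N hN y i]
    rw [← hA, ← hC, ← hD]
    ring
  have hS1 : (∑ k ∈ Finset.range (N-1), (w (k+2) - 2*w (k+1) + w k) * w (k+1))
      ≤ -(1/(N:ℝ)^2) * ‖v‖^2 := by
    rw [sumparts (N-1) w hw0 hwN, hnorm, hM]
    have hp := poincare (N-1) w hw0
    have hcast : ((N-1:ℕ):ℝ) + 1 = (N:ℝ) := by
      exact_mod_cast congrArg (fun n : ℕ => (n:ℝ)) hM
    rw [hcast, hM] at hp
    set S := ∑ k ∈ Finset.range N, (w (k+1) - w k)^2 with hSdef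
    set T := ∑ k ∈ Finset.range (N-1), (w (k+1))^2 with hTdef
    rw [neg_mul, neg_le_neg_iff, div_mul_eq_mul_div, one_mul, div_le_iff₀ hN2]
    linarith
  have hvnorm2 : ‖v‖^2 = ∑ i : Fin (N-1), (x i - y i)^2 := by
    rw [hnorm, ← Fin.sum_univ_eq_sum_range (fun k => (w (k+1))^2)]
    apply Finset.sum_congr rfl
    intro i _
    have hD : x i - y i = w ((i:ℕ)+1) := by
      rw [hwdef, show (((i:ℕ)+1:ℕ):ℤ) = ((i:ℕ):ℤ)+1 by omega, ext_sub,
        ext_coord N hN x i, ext_coord N hN y i]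
    rw [hD]
  have hS2 : m * ‖v‖^2 ≤ ∑ i : Fin (N-1),
      (f ((((i:ℕ):ℝ)+1)/(N:ℝ)) (x i) - f ((((i:ℕ):ℝ)+1)/(N:ℝ)) (y i)) * (x i - y i) := by
    rw [hvnorm2, Finset.mul_sum]
    apply Finset.sum_le_sum
    intro i _
    exact mvt_ineq (fun z => f ((((i:ℕ):ℝ)+1)/(N:ℝ)) z) (fun z => fx ((((i:ℕ):ℝ)+1)/(N:ℝ)) z) m
      (hfx_deriv _ (mem_unit N hN i)) (hlb _ (mem_unit N hN i)) (x i) (y i)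
  rw [hsplit]
  have h2 : -(1/(N:ℝ)^2) * (∑ i : Fin (N-1),
      (f ((((i:ℕ):ℝ)+1)/(N:ℝ)) (x i) - f ((((i:ℕ):ℝ)+1)/(N:ℝ)) (y i)) * (x i - y i))
      ≤ -(1/(N:ℝ)^2) * (m * ‖v‖^2) := by
    apply mul_le_mul_of_nonpos_left hS2
    simp only [neg_nonpos]
    positivity
  have heq : -(1/(N:ℝ)^2) * ‖v‖^2 + -(1/(N:ℝ)^2) * (m * ‖v‖^2)
      = -((1+m)/(N:ℝ)^2) * ‖v‖^2 := by ring
  rw [hv] at hS1 h2 heq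
  linarith

lemma contDiff_ext (N : ℕ) (k : ℤ) :
    ContDiff ℝ 1 (fun x : EuclideanSpace ℝ (Fin (N-1)) => ext N x k) := by
  by_cases h : 1 ≤ k ∧ k ≤ (N:ℤ) - 1
  · have : (fun x : EuclideanSpace ℝ (Fin (N-1)) => ext N x k)
        = fun x => (EuclideanSpace.proj (⟨(k-1).toNat, by omega⟩ : Fin (N-1))
            : EuclideanSpace ℝ (Fin (N-1)) →L[ℝ] ℝ) x := by
      funext x
      unfold ext
      rw [dif_pos h]
      rfl
    rw [this]
    exact (EuclideanSpace.proj (⟨(k-1).toNat, by omega⟩ : Fin (N-1))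
            : EuclideanSpace ℝ (Fin (N-1)) →L[ℝ] ℝ).contDiff
  · have : (fun x : EuclideanSpace ℝ (Fin (N-1)) => ext N x k) = fun _ => (0:ℝ) := by
      funext x; exact dif_neg h
    rw [this]
    exact contDiff_const

lemma cont_slice {g : ℝ → ℝ → ℝ}
    (hg : ContinuousOn (fun p : ℝ × ℝ => g p.1 p.2) (Set.Icc 0 1 ×ˢ Set.univ))
    {t : ℝ} (ht : t ∈ Set.Icc (0:ℝ) 1) : Continuous fun z => g t z := by
  have h1 : Continuous fun z : ℝ => (t, z) := by continuity
  rw [← continuousOn_univ]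
  exact hg.comp h1.continuousOn (fun z _ => ⟨ht, trivial⟩)

lemma slice_contDiff (f fx : ℝ → ℝ → ℝ)
    (hfx_deriv : ∀ t ∈ Set.Icc (0:ℝ) 1, ∀ z : ℝ, HasDerivAt (fun w => f t w) (fx t z) z)
    (hfx_cont : ContinuousOn (fun p : ℝ × ℝ => fx p.1 p.2) (Set.Icc 0 1 ×ˢ Set.univ))
    {t : ℝ} (ht : t ∈ Set.Icc (0:ℝ) 1) : ContDiff ℝ 1 (fun z => f t z) := by
  rw [contDiff_one_iff_deriv]
  constructor
  · exact fun z => (hfx_deriv t ht z).differentiableAt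
  · have : deriv (fun z => f t z) = fun z => fx t z := by
      funext z
      exact (hfx_deriv t ht z).deriv
    rw [this]
    exact cont_slice hfx_cont ht

theorem DN_contDiff (N : ℕ) (hN : 2 ≤ N) (f fx : ℝ → ℝ → ℝ)
    (hfx_deriv : ∀ t ∈ Set.Icc (0:ℝ) 1, ∀ z : ℝ, HasDerivAt (fun w => f t w) (fx t z) z)
    (hfx_cont : ContinuousOn (fun p : ℝ × ℝ => fx p.1 p.2) (Set.Icc 0 1 ×ˢ Set.univ)) :
    ContDiff ℝ 1 (DN N f) := by
  rw [contDiff_euclidean]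
  intro i
  have h1 := contDiff_ext N (((i:ℕ):ℤ)+2)
  have h2 := contDiff_ext N (((i:ℕ):ℤ)+1)
  have h3 := contDiff_ext N ((i:ℕ):ℤ)
  have h4 : ContDiff ℝ 1 (fun x : EuclideanSpace ℝ (Fin (N-1)) =>
      f ((((i:ℕ):ℝ)+1)/(N:ℝ)) (ext N x (((i:ℕ):ℤ)+1))) :=
    (slice_contDiff f fx hfx_deriv hfx_cont (mem_unit N hN i)).comp h2
  show ContDiff ℝ 1 (fun x => ext N x (((i:ℕ):ℤ)+2) - 2 * ext N x (((i:ℕ):ℤ)+1) + ext N x ((i:ℕ):ℤ)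
    - (1/(N:ℝ)^2) * f ((((i:ℕ):ℝ)+1)/(N:ℝ)) (ext N x (((i:ℕ):ℤ)+1)))
  exact ((h1.sub (contDiff_const.mul h2)).add h3).sub (contDiff_const.mul h4)

/-- Under C(c), D(f) (`A < 1`) and D(f_x) (`inf f_x > −1`), the operator
`D_N : 𝔼_N → 𝔼_N`, `(D_N x)(k) = Δ²x(k−1) − (1/N²) f(k/N, x(k))`, is a diffeomorphism:
bijective, of class `C¹`, and with a `C¹` inverse. -/
theorem DN_is_diffeomorphism
    (N : ℕ) (hN : 2 ≤ N) (f fx : ℝ → ℝ → ℝ)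
    (hf_cont : ContinuousOn (fun p : ℝ × ℝ => f p.1 p.2) (Set.Icc 0 1 ×ˢ Set.univ))
    (hfx_deriv : ∀ t ∈ Set.Icc (0:ℝ) 1, ∀ z : ℝ, HasDerivAt (fun w => f t w) (fx t z) z)
    (hfx_cont : ContinuousOn (fun p : ℝ × ℝ => fx p.1 p.2) (Set.Icc 0 1 ×ˢ Set.univ))
    (A B : ℝ) (hA : 0 < A) (hB : 0 < B) (hAlt : A < 1)
    (hgrowth : ∀ t ∈ Set.Icc (0:ℝ) 1, ∀ z : ℝ, |f t z| ≤ A * |z| + B)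
    (hfx_lb : ∃ m : ℝ, -1 < m ∧ ∀ t ∈ Set.Icc (0:ℝ) 1, ∀ z : ℝ, m ≤ fx t z) :
    Function.Bijective (DN N f) ∧ ContDiff ℝ 1 (DN N f) ∧
      ∃ G : EuclideanSpace ℝ (Fin (N-1)) → EuclideanSpace ℝ (Fin (N-1)),
        Function.LeftInverse G (DN N f) ∧ Function.RightInverse G (DN N f) ∧
        ContDiff ℝ 1 G := by
  classical
  obtain ⟨m, hm1, hm2⟩ := hfx_lb
  have hNR : (0:ℝ) < (N:ℝ) := by exact_mod_cast (show 0 < N by omega)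
  have hN2 : (0:ℝ) < (N:ℝ)^2 := by positivity
  set c : ℝ := (1+m)/(N:ℝ)^2 with hc
  have hcpos : 0 < c := div_pos (by linarith) hN2
  have hcd : ContDiff ℝ 1 (DN N f) := DN_contDiff N hN f fx hfx_deriv hfx_cont
  set F : EuclideanSpace ℝ (Fin (N-1)) → EuclideanSpace ℝ (Fin (N-1)) :=
    fun x => -(DN N f x) with hF
  have hFcd : ContDiff ℝ 1 F := hcd.neg
  have hmono : ∀ x y, c * ‖x - y‖^2 ≤ inner (𝕜 := ℝ) (F x - F y) (x - y) := by
    intro x y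
    have h1 := key_ineq N hN f fx m hfx_deriv hm2 x y
    have h2 : inner (𝕜 := ℝ) (F x - F y) (x - y)
        = -(inner (𝕜 := ℝ) (DN N f x - DN N f y) (x - y)) := by
      rw [show F x - F y = -(DN N f x - DN N f y) by rw [hF]; beta_reduce; abel, inner_neg_left]
    rw [h2, hc]
    linarith
  obtain ⟨hFbij, G0, hGl, hGr, hGcd⟩ := strong_mono_diffeo hFcd hcpos hmono
  have hDNeq : DN N f = fun x => -(F x) := by
    funext x
    rw [hF]
    simp
  refine ⟨?_, hcd, fun y => G0 (-y), ?_, ?_, hGcd.comp contDiff_neg⟩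
  · rw [hDNeq]
    exact neg_involutive.bijective.comp hFbij
  · intro x
    show G0 (-(DN N f x)) = x
    have h3 : -(DN N f x) = F x := by rw [hF]
    rw [h3]
    exact hGl x
  · intro y
    show DN N f (G0 (-y)) = y
    have h1 : DN N f (G0 (-y)) = -(F (G0 (-y))) := by rw [hDNeq]
    rw [h1, hGr (-y), neg_neg]
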